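/- Let H be a Hopf algebra with invertible antipode, and in H_par define ε_h = [h₍₁₎][S(h₍₂₎)] and ε̃_h = [S(h₍₁₎)][h₍₂₎]. Then for all h,k ∈ H: (a) ε_k[h] = [h₍₂₎]ε_{S⁻¹(h₍₁₎)k}; (b) [h]ε_k = ε_{h₍₁₎k}[h₍₂₎]; (c) ε_{h₍₁₎}ε_{h₍₂₎} = ε_h; (f) ε̃_{h₍₁₎}ε̃_{h₍₂₎} = ε̃_h; (g) ε̃_hε_k = ε_kε̃_h. -/

import Mathlib

open TensorProduct BigOperators HopfAlgebra

variable (k : Type) [CommRing k] (H : Type) [Ring H] [HopfAlgebra k H]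

/-- `sw f g : H → T(H)` is the Sweedler convolution `x ↦ ∑ f(x₍₁₎) * g(x₍₂₎)`. -/
noncomputable def sw (f g : H →ₗ[k] TensorAlgebra k H) : H →ₗ[k] TensorAlgebra k H :=
  (LinearMap.mul' k (TensorAlgebra k H)) ∘ₗ (TensorProduct.map f g) ∘ₗ
    (Coalgebra.comul (R := k))

/-- The defining relations of the universal partial "Hopf" algebra `H_par`,
imposed on the tensor algebra `T(H)`. -/
inductive HparRel : TensorAlgebra k H → TensorAlgebra k H → Prop
  | one : HparRel (TensorAlgebra.ι k (1 : H)) 1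
  | pr2 (h x : H) : HparRel
      (TensorAlgebra.ι k h *
        sw k H (TensorAlgebra.ι k) ((TensorAlgebra.ι k) ∘ₗ antipode (R := k)) x)
      (sw k H ((TensorAlgebra.ι k) ∘ₗ LinearMap.mulLeft k h)
        ((TensorAlgebra.ι k) ∘ₗ antipode (R := k)) x)
  | pr3 (h x : H) : HparRel
      (sw k H (TensorAlgebra.ι k) ((TensorAlgebra.ι k) ∘ₗ antipode (R := k)) h *
        TensorAlgebra.ι k x)
      (sw k H (TensorAlgebra.ι k)
        ((TensorAlgebra.ι k) ∘ₗ (LinearMap.mulRight k x) ∘ₗ antipode (R := k)) h)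
  | pr4 (h x : H) : HparRel
      (TensorAlgebra.ι k h *
        sw k H ((TensorAlgebra.ι k) ∘ₗ antipode (R := k)) (TensorAlgebra.ι k) x)
      (sw k H ((TensorAlgebra.ι k) ∘ₗ (LinearMap.mulLeft k h) ∘ₗ antipode (R := k))
        (TensorAlgebra.ι k) x)
  | pr5 (h x : H) : HparRel
      (sw k H ((TensorAlgebra.ι k) ∘ₗ antipode (R := k)) (TensorAlgebra.ι k) h *
        TensorAlgebra.ι k x)
      (sw k H ((TensorAlgebra.ι k) ∘ₗ antipode (R := k))
        ((TensorAlgebra.ι k) ∘ₗ LinearMap.mulRight k x) h)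

/-- The universal partial "Hopf" algebra `H_par` of a Hopf algebra `H`. -/
abbrev Hpar : Type := RingQuot (HparRel k H)

/-- The canonical (universal) partial representation `h ↦ [h]` of `H` on `H_par`. -/
noncomputable def bracket : H →ₗ[k] Hpar k H :=
  (RingQuot.mkAlgHom k (HparRel k H)).toLinearMap ∘ₗ TensorAlgebra.ι k

/-- `ε_h = [h₍₁₎][S(h₍₂₎)]` in `H_par`. -/
noncomputable def epsilonPar : H →ₗ[k] Hpar k H :=
  (LinearMap.mul' k (Hpar k H)) ∘ₗ
    (TensorProduct.map (bracket k H) ((bracket k H) ∘ₗ antipode (R := k))) ∘ₗ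
    (Coalgebra.comul (R := k))

/-- `ε̃_h = [S(h₍₁₎)][h₍₂₎]` in `H_par`. -/
noncomputable def epsilonTildePar : H →ₗ[k] Hpar k H :=
  (LinearMap.mul' k (Hpar k H)) ∘ₗ
    (TensorProduct.map ((bracket k H) ∘ₗ antipode (R := k)) (bracket k H)) ∘ₗ
    (Coalgebra.comul (R := k))




section Tools

open Coalgebra LinearMap

variable {C M A : Type} [AddCommGroup C] [Module k C] [Coalgebra k C]
  [AddCommMonoid M] [Module k M] [Semiring A] [Algebra k A]

variable {k}

/-- Coassociativity, applied through an arbitrary linear map. -/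
theorem sumW3 (Φ : C ⊗[k] (C ⊗[k] C) →ₗ[k] M) {a : C} {ι ι₁ ι₂ : Type*} (r : Coalgebra.Repr k a ι)
    (r1 : ∀ i, Coalgebra.Repr k (r.left i) ι₁) (r2 : ∀ i, Coalgebra.Repr k (r.right i) ι₂) :
    ∑ i ∈ r.index, ∑ j ∈ (r1 i).index,
        Φ ((r1 i).left j ⊗ₜ[k] ((r1 i).right j ⊗ₜ[k] r.right i)) =
      ∑ i ∈ r.index, ∑ j ∈ (r2 i).index,
        Φ (r.left i ⊗ₜ[k] ((r2 i).left j ⊗ₜ[k] (r2 i).right j)) := by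
  have h := Coalgebra.sum_tmul_tmul_eq r r1 r2
  have h2 := congrArg Φ h
  simpa [map_sum] using h2

theorem counit_smul_left_sum {a : C} {ι : Type*} (r : Coalgebra.Repr k a ι) :
    ∑ i ∈ r.index, Coalgebra.counit (R := k) (r.left i) • r.right i = a := by
  have h := Coalgebra.sum_counit_tmul_eq r
  have h2 := congrArg (TensorProduct.lid k C) h
  simp only [map_sum, lid_tmul, one_smul] at h2
  exact h2

theorem counit_smul_right_sum {a : C} {ι : Type*} (r : Coalgebra.Repr k a ι) :
    ∑ i ∈ r.index, Coalgebra.counit (R := k) (r.right i) • r.left i = a := by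
  have h := Coalgebra.sum_tmul_counit_eq r
  have h2 := congrArg (TensorProduct.rid k C) h
  simp only [map_sum, rid_tmul, one_smul] at h2
  exact h2

/-- Convolution product of linear maps from a coalgebra to an algebra. -/
noncomputable def cnv (f g : C →ₗ[k] A) : C →ₗ[k] A :=
  LinearMap.mul' k A ∘ₗ TensorProduct.map f g ∘ₗ Coalgebra.comul (R := k)

/-- The convolution unit. -/
noncomputable def cunit : C →ₗ[k] A :=
  Algebra.linearMap k A ∘ₗ Coalgebra.counit (R := k)

theorem cnv_repr (f g : C →ₗ[k] A) {a : C} {ι : Type*} (r : Coalgebra.Repr k a ι) :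
    cnv f g a = ∑ i ∈ r.index, f (r.left i) * g (r.right i) := by
  simp only [cnv, comp_apply, ← r.eq, map_sum, TensorProduct.map_tmul, mul'_apply]

theorem cnv_assoc (f g e : C →ₗ[k] A) : cnv (cnv f g) e = cnv f (cnv g e) := by
  ext c
  set r := ℛ k c with hr
  set r1 : ∀ i, Coalgebra.Repr k (r.left i) (C × C) := fun i => ℛ k (r.left i) with hr1
  set r2 : ∀ i, Coalgebra.Repr k (r.right i) (C × C) := fun i => ℛ k (r.right i) with hr2
  set Φ : C ⊗[k] (C ⊗[k] C) →ₗ[k] A :=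
    LinearMap.mul' k A ∘ₗ TensorProduct.map f (LinearMap.mul' k A ∘ₗ TensorProduct.map g e)
    with hΦ
  calc cnv (cnv f g) e c = ∑ i ∈ r.index, cnv f g (r.left i) * e (r.right i) :=
        cnv_repr _ _ r
    _ = ∑ i ∈ r.index, ∑ j ∈ (r1 i).index,
          Φ ((r1 i).left j ⊗ₜ[k] ((r1 i).right j ⊗ₜ[k] r.right i)) := by
        refine Finset.sum_congr rfl fun i _ => ?_
        rw [cnv_repr f g (r1 i), Finset.sum_mul]
        exact Finset.sum_congr rfl fun j _ => by
          simp [hΦ, mul_assoc]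
    _ = ∑ i ∈ r.index, ∑ j ∈ (r2 i).index,
          Φ (r.left i ⊗ₜ[k] ((r2 i).left j ⊗ₜ[k] (r2 i).right j)) := sumW3 Φ r r1 r2
    _ = cnv f (cnv g e) c := by
        rw [cnv_repr f (cnv g e) r]
        refine Finset.sum_congr rfl fun i _ => ?_
        rw [cnv_repr g e (r2 i), Finset.mul_sum]
        exact Finset.sum_congr rfl fun j _ => by simp [hΦ, mul_assoc]

theorem cnv_cunit_left (f : C →ₗ[k] A) : cnv cunit f = f := by
  ext c
  rw [cnv_repr cunit f (ℛ k c)]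
  calc ∑ i ∈ (ℛ k c).index, cunit ((ℛ k c).left i) * f ((ℛ k c).right i)
      = ∑ i ∈ (ℛ k c).index,
          Coalgebra.counit (R := k) ((ℛ k c).left i) • f ((ℛ k c).right i) := by
        refine Finset.sum_congr rfl fun i _ => ?_
        simp [cunit, Algebra.smul_def]
    _ = f c := by
        simp_rw [← map_smul, ← map_sum]
        rw [counit_smul_left_sum]

theorem cnv_cunit_right (f : C →ₗ[k] A) : cnv f cunit = f := by
  ext c
  rw [cnv_repr f cunit (ℛ k c)]
  calc ∑ i ∈ (ℛ k c).index, f ((ℛ k c).left i) * cunit ((ℛ k c).right i)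
      = ∑ i ∈ (ℛ k c).index,
          Coalgebra.counit (R := k) ((ℛ k c).right i) • f ((ℛ k c).left i) := by
        refine Finset.sum_congr rfl fun i _ => ?_
        simp [cunit, Algebra.smul_def, Algebra.commutes]
    _ = f c := by
        simp_rw [← map_smul, ← map_sum]
        rw [counit_smul_right_sum]

theorem cnv_inv_unique {f g g' : C →ₗ[k] A} (hfg : cnv f g = cunit)
    (hg'f : cnv g' f = cunit) : g' = g := by
  calc g' = cnv g' cunit := (cnv_cunit_right g').symm
    _ = cnv g' (cnv f g) := by rw [hfg]
    _ = cnv (cnv g' f) g := (cnv_assoc _ _ _).symm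
    _ = cnv cunit g := by rw [hg'f]
    _ = g := cnv_cunit_left g

theorem sumW4 (Φ : C ⊗[k] (C ⊗[k] (C ⊗[k] C)) →ₗ[k] M) {a : C} {ι ι₁ ι₂ ι₃ : Type*}
    (r : Coalgebra.Repr k a ι)
    (r1 : ∀ i, Coalgebra.Repr k (r.left i) ι₁) (r2 : ∀ i, Coalgebra.Repr k (r.right i) ι₂)
    (r21 : ∀ i j, Coalgebra.Repr k ((r2 i).left j) ι₃) :
    ∑ i ∈ r.index, ∑ m ∈ (r1 i).index, ∑ j ∈ (r2 i).index,
        Φ ((r1 i).left m ⊗ₜ[k] ((r1 i).right m ⊗ₜ[k] ((r2 i).left j ⊗ₜ[k] (r2 i).right j)))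
      = ∑ i ∈ r.index, ∑ j ∈ (r2 i).index, ∑ m ∈ (r21 i j).index,
        Φ (r.left i ⊗ₜ[k] ((r21 i j).left m ⊗ₜ[k] ((r21 i j).right m ⊗ₜ[k] (r2 i).right j))) := by
  classical
  set r22 : ∀ i j, Coalgebra.Repr k ((r2 i).right j) (C × C) := fun i j => ℛ k ((r2 i).right j)
    with hr22
  set L : C ⊗[k] (C ⊗[k] C) →ₗ[k] C ⊗[k] (C ⊗[k] (C ⊗[k] C)) :=
    LinearMap.lTensor C (LinearMap.lTensor C (Coalgebra.comul (R := k))) with hLdef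
  have hL : ∑ i ∈ r.index, ∑ m ∈ (r1 i).index, ∑ j ∈ (r2 i).index,
        ((r1 i).left m ⊗ₜ[k] ((r1 i).right m ⊗ₜ[k] ((r2 i).left j ⊗ₜ[k] (r2 i).right j)))
      = ∑ i ∈ r.index, ∑ j ∈ (r2 i).index, ∑ m ∈ (r22 i j).index,
        (r.left i ⊗ₜ[k] ((r2 i).left j ⊗ₜ[k] ((r22 i j).left m ⊗ₜ[k] (r22 i j).right m))) := by
    calc ∑ i ∈ r.index, ∑ m ∈ (r1 i).index, ∑ j ∈ (r2 i).index,
          ((r1 i).left m ⊗ₜ[k] ((r1 i).right m ⊗ₜ[k] ((r2 i).left j ⊗ₜ[k] (r2 i).right j)))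
        = ∑ i ∈ r.index, ∑ m ∈ (r1 i).index,
            L ((r1 i).left m ⊗ₜ[k] ((r1 i).right m ⊗ₜ[k] r.right i)) := by
          refine Finset.sum_congr rfl fun i _ => Finset.sum_congr rfl fun m _ => ?_
          simp only [hLdef, LinearMap.lTensor_tmul, ← (r2 i).eq, tmul_sum]
      _ = L (∑ i ∈ r.index, ∑ m ∈ (r1 i).index,
            ((r1 i).left m ⊗ₜ[k] ((r1 i).right m ⊗ₜ[k] r.right i))) := by
          simp [map_sum]
      _ = L (∑ i ∈ r.index, ∑ j ∈ (r2 i).index,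
            (r.left i ⊗ₜ[k] ((r2 i).left j ⊗ₜ[k] (r2 i).right j))) := by
          rw [Coalgebra.sum_tmul_tmul_eq r r1 r2]
      _ = ∑ i ∈ r.index, ∑ j ∈ (r2 i).index,
            L (r.left i ⊗ₜ[k] ((r2 i).left j ⊗ₜ[k] (r2 i).right j)) := by
          simp [map_sum]
      _ = ∑ i ∈ r.index, ∑ j ∈ (r2 i).index, ∑ m ∈ (r22 i j).index,
            (r.left i ⊗ₜ[k] ((r2 i).left j ⊗ₜ[k] ((r22 i j).left m ⊗ₜ[k] (r22 i j).right m))) := by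
          refine Finset.sum_congr rfl fun i _ => Finset.sum_congr rfl fun j _ => ?_
          simp only [hLdef, LinearMap.lTensor_tmul, ← (r22 i j).eq, tmul_sum]
  have hR : ∑ i ∈ r.index, ∑ j ∈ (r2 i).index, ∑ m ∈ (r21 i j).index,
        (r.left i ⊗ₜ[k] ((r21 i j).left m ⊗ₜ[k] ((r21 i j).right m ⊗ₜ[k] (r2 i).right j)))
      = ∑ i ∈ r.index, ∑ j ∈ (r2 i).index, ∑ m ∈ (r22 i j).index,
        (r.left i ⊗ₜ[k] ((r2 i).left j ⊗ₜ[k] ((r22 i j).left m ⊗ₜ[k] (r22 i j).right m))) := by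
    refine Finset.sum_congr rfl fun i _ => ?_
    calc ∑ j ∈ (r2 i).index, ∑ m ∈ (r21 i j).index,
          (r.left i ⊗ₜ[k] ((r21 i j).left m ⊗ₜ[k] ((r21 i j).right m ⊗ₜ[k] (r2 i).right j)))
        = r.left i ⊗ₜ[k] (∑ j ∈ (r2 i).index, ∑ m ∈ (r21 i j).index,
            ((r21 i j).left m ⊗ₜ[k] ((r21 i j).right m ⊗ₜ[k] (r2 i).right j))) := by
          simp [tmul_sum]
      _ = r.left i ⊗ₜ[k] (∑ j ∈ (r2 i).index, ∑ m ∈ (r22 i j).index,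
            ((r2 i).left j ⊗ₜ[k] ((r22 i j).left m ⊗ₜ[k] (r22 i j).right m))) := by
          rw [Coalgebra.sum_tmul_tmul_eq (r2 i) (r21 i) (r22 i)]
      _ = ∑ j ∈ (r2 i).index, ∑ m ∈ (r22 i j).index,
            (r.left i ⊗ₜ[k] ((r2 i).left j ⊗ₜ[k] ((r22 i j).left m ⊗ₜ[k] (r22 i j).right m))) := by
          simp [tmul_sum]
  have key := hL.trans hR.symm
  have h2 := congrArg Φ key
  simpa [map_sum] using h2

end Tools


section Hopf

open Coalgebra LinearMap

variable {k : Type} [CommRing k] {H : Type} [Ring H] [HopfAlgebra k H]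

theorem antipode_one' : antipode (R := k) (1 : H) = 1 := by
  have h := mul_antipode_rTensor_comul_apply (R := k) (A := H) (1 : H)
  simpa [Algebra.TensorProduct.one_def] using h

/-- A representation of `comul (a * b)` from representations of `comul a`, `comul b`. -/
noncomputable def mulRepr {a b : H} {ι ι' : Type*} (ra : Coalgebra.Repr k a ι) (rb : Coalgebra.Repr k b ι') :
    Coalgebra.Repr k (a * b) (ι × ι') where
  index := ra.index ×ˢ rb.index
  left p := ra.left p.1 * rb.left p.2
  right p := ra.right p.1 * rb.right p.2
  eq := by
    have h : CoalgebraStruct.comul (R := k) (a * b) =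
        CoalgebraStruct.comul (R := k) a * CoalgebraStruct.comul (R := k) b :=
      Bialgebra.comul_mul a b
    rw [h, ← ra.eq, ← rb.eq, Finset.sum_mul_sum]
    rw [Finset.sum_product]
    exact Finset.sum_congr rfl fun i _ => Finset.sum_congr rfl fun j _ =>
      (Algebra.TensorProduct.tmul_mul_tmul _ _ _ _).symm

/-- A representation of `comul (a ⊗ₜ b)` in the tensor product coalgebra. -/
noncomputable def tmulRepr {a b : H} {ι ι' : Type*} (ra : Coalgebra.Repr k a ι) (rb : Coalgebra.Repr k b ι') :
    Coalgebra.Repr k (a ⊗ₜ[k] b : H ⊗[k] H) (ι × ι') where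
  index := ra.index ×ˢ rb.index
  left p := ra.left p.1 ⊗ₜ[k] rb.left p.2
  right p := ra.right p.1 ⊗ₜ[k] rb.right p.2
  eq := by
    rw [TensorProduct.comul_def]
    show _ = TensorProduct.tensorTensorTensorComm k H H H H
      (TensorProduct.map (CoalgebraStruct.comul (R := k))
        (CoalgebraStruct.comul (R := k)) (a ⊗ₜ[k] b))
    rw [TensorProduct.map_tmul, ← ra.eq, ← rb.eq]
    rw [TensorProduct.sum_tmul, map_sum, Finset.sum_product]
    refine Finset.sum_congr rfl fun i _ => ?_
    rw [TensorProduct.tmul_sum, map_sum]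
    exact Finset.sum_congr rfl fun j _ => by
      rw [TensorProduct.tensorTensorTensorComm_tmul]

theorem counit_antipode' (h : H) :
    Coalgebra.counit (R := k) (antipode (R := k) h) = Coalgebra.counit (R := k) h := by
  classical
  set r := ℛ k h with hr
  have h1 := sum_antipode_mul_eq_algebraMap_counit (R := k) r
  have h2 := congrArg (Coalgebra.counit (R := k)) h1
  rw [map_sum, Bialgebra.counit_algebraMap] at h2
  have h3 : ∑ i ∈ r.index,
      Coalgebra.counit (R := k) (antipode (R := k) (r.left i) * r.right i)
      = Coalgebra.counit (R := k) (antipode (R := k) h) := by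
    calc ∑ i ∈ r.index,
        Coalgebra.counit (R := k) (antipode (R := k) (r.left i) * r.right i)
        = ∑ i ∈ r.index, Coalgebra.counit (R := k)
            (antipode (R := k) (Coalgebra.counit (R := k) (r.right i) • r.left i)) := by
          refine Finset.sum_congr rfl fun i _ => ?_
          rw [Bialgebra.counit_mul, map_smul, map_smul, smul_eq_mul, mul_comm]
      _ = Coalgebra.counit (R := k) (antipode (R := k) h) := by
          simp_rw [← map_sum]
          rw [counit_smul_right_sum r]
  rw [h3] at h2
  exact h2

theorem antipode_mul' (a b : H) :
    antipode (R := k) (a * b) = antipode (R := k) b * antipode (R := k) a := by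
  classical
  set S : H →ₗ[k] H := antipode (R := k) with hS
  set g' : H ⊗[k] H →ₗ[k] H :=
    LinearMap.mul' k H ∘ₗ TensorProduct.map S S ∘ₗ (TensorProduct.comm k H H).toLinearMap
    with hg'
  have c1 : cnv (LinearMap.mul' k H) (S ∘ₗ LinearMap.mul' k H) = cunit := by
    apply TensorProduct.ext'
    intro a b
    rw [cnv_repr _ _ (tmulRepr (ℛ k a) (ℛ k b))]
    have h1 := sum_mul_antipode_eq_algebraMap_counit (R := k) (mulRepr (ℛ k a) (ℛ k b))
    simp only [mulRepr, tmulRepr, LinearMap.comp_apply, LinearMap.mul'_apply,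
      TensorProduct.map_tmul, ← hS] at h1 ⊢
    rw [h1, cunit, LinearMap.comp_apply]
    rw [TensorProduct.counit_def]
    simp [Bialgebra.counit_mul]
    exact Algebra.commutes _ _
  have c2 : cnv g' (LinearMap.mul' k H) = cunit := by
    apply TensorProduct.ext'
    intro a b
    rw [cnv_repr _ _ (tmulRepr (ℛ k a) (ℛ k b))]
    show ∑ p ∈ (ℛ k a).index ×ˢ (ℛ k b).index,
        g' ((ℛ k a).left p.1 ⊗ₜ[k] (ℛ k b).left p.2) *
          LinearMap.mul' k H ((ℛ k a).right p.1 ⊗ₜ[k] (ℛ k b).right p.2) = cunit (a ⊗ₜ[k] b)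
    rw [Finset.sum_product, Finset.sum_comm]
    have hj : ∀ j ∈ (ℛ k b).index, ∑ i ∈ (ℛ k a).index,
        g' ((ℛ k a).left i ⊗ₜ[k] (ℛ k b).left j) *
          LinearMap.mul' k H ((ℛ k a).right i ⊗ₜ[k] (ℛ k b).right j)
        = Coalgebra.counit (R := k) a • (S ((ℛ k b).left j) * (ℛ k b).right j) := by
      intro j _
      calc ∑ i ∈ (ℛ k a).index,
          g' ((ℛ k a).left i ⊗ₜ[k] (ℛ k b).left j) *
            LinearMap.mul' k H ((ℛ k a).right i ⊗ₜ[k] (ℛ k b).right j)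
          = ∑ i ∈ (ℛ k a).index, S ((ℛ k b).left j) *
              ((S ((ℛ k a).left i) * (ℛ k a).right i) * (ℛ k b).right j) := by
            refine Finset.sum_congr rfl fun i _ => ?_
            simp only [hg', LinearMap.comp_apply, LinearEquiv.coe_coe,
              TensorProduct.comm_tmul, TensorProduct.map_tmul, LinearMap.mul'_apply]
            rw [mul_assoc, mul_assoc]
        _ = S ((ℛ k b).left j) *
              ((∑ i ∈ (ℛ k a).index, S ((ℛ k a).left i) * (ℛ k a).right i) *
                (ℛ k b).right j) := by
            rw [← Finset.mul_sum, ← Finset.sum_mul]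
        _ = S ((ℛ k b).left j) * (algebraMap k H (Coalgebra.counit (R := k) a) *
              (ℛ k b).right j) := by
            rw [sum_antipode_mul_eq_algebraMap_counit (ℛ k a)]
        _ = Coalgebra.counit (R := k) a • (S ((ℛ k b).left j) * (ℛ k b).right j) := by
            rw [← Algebra.smul_def, mul_smul_comm]
    rw [Finset.sum_congr rfl hj, ← Finset.smul_sum, sum_antipode_mul_eq_algebraMap_counit (ℛ k b),
      Algebra.smul_def, ← map_mul]
    rw [cunit, LinearMap.comp_apply, TensorProduct.counit_def]
    simp
    exact Algebra.commutes _ _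
  have huniq : g' = S ∘ₗ LinearMap.mul' k H := cnv_inv_unique c1 c2
  have := LinearMap.congr_fun huniq (a ⊗ₜ[k] b)
  simpa [hg'] using this.symm

end Hopf


section

open Coalgebra LinearMap

variable {k : Type} [CommRing k] {H : Type} [Ring H] [HopfAlgebra k H]

theorem comul_antipode' (h : H) :
    Coalgebra.comul (R := k) (antipode (R := k) h) =
      TensorProduct.map (antipode (R := k)) (antipode (R := k))
        ((TensorProduct.comm k H H) (Coalgebra.comul (R := k) h)) := by
  classical
  set S : H →ₗ[k] H := antipode (R := k) with hS
  set Δ : H →ₗ[k] H ⊗[k] H := Coalgebra.comul (R := k) with hΔ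
  set G : H →ₗ[k] H ⊗[k] H :=
    TensorProduct.map S S ∘ₗ (TensorProduct.comm k H H).toLinearMap ∘ₗ Δ with hG
  have c1 : cnv Δ (Δ ∘ₗ S) = cunit := by
    apply LinearMap.ext; intro c
    rw [cnv_repr _ _ (ℛ k c)]
    calc ∑ i ∈ (ℛ k c).index, Δ ((ℛ k c).left i) * (Δ ∘ₗ S) ((ℛ k c).right i)
        = ∑ i ∈ (ℛ k c).index, Δ ((ℛ k c).left i * S ((ℛ k c).right i)) := by
          refine Finset.sum_congr rfl fun i _ => ?_
          rw [LinearMap.comp_apply]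
          exact (Bialgebra.comul_mul _ _).symm
      _ = Δ (∑ i ∈ (ℛ k c).index, (ℛ k c).left i * S ((ℛ k c).right i)) := (map_sum _ _ _).symm
      _ = cunit c := by
          rw [sum_mul_antipode_eq_algebraMap_counit (ℛ k c)]
          simp [hΔ, cunit]
  have c2 : cnv G Δ = cunit := by
    apply LinearMap.ext; intro c
    set r := ℛ k c with hr
    set r1 : ∀ i, Coalgebra.Repr k (r.left i) (H × H) := fun i => ℛ k (r.left i) with hr1
    set r2 : ∀ i, Coalgebra.Repr k (r.right i) (H × H) := fun i => ℛ k (r.right i) with hr2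
    set r21 : ∀ i j, Coalgebra.Repr k ((r2 i).left j) (H × H) := fun i j => ℛ k ((r2 i).left j)
      with hr21
    set Φ : H ⊗[k] (H ⊗[k] (H ⊗[k] H)) →ₗ[k] H ⊗[k] H :=
      TensorProduct.map (LinearMap.mul' k H) (LinearMap.mul' k H) ∘ₗ
        (TensorProduct.tensorTensorTensorComm k H H H H).toLinearMap ∘ₗ
        TensorProduct.map (TensorProduct.map S S ∘ₗ (TensorProduct.comm k H H).toLinearMap)
          LinearMap.id ∘ₗ
        (TensorProduct.assoc k H H (H ⊗[k] H)).symm.toLinearMap with hΦ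
    have hΦ' : ∀ x y z w : H,
        Φ (x ⊗ₜ[k] (y ⊗ₜ[k] (z ⊗ₜ[k] w))) = (S y * z) ⊗ₜ[k] (S x * w) := by
      intro x y z w
      simp [hΦ]
    rw [cnv_repr _ _ r]
    calc ∑ i ∈ r.index, G (r.left i) * Δ (r.right i)
        = ∑ i ∈ r.index, ∑ m ∈ (r1 i).index, ∑ j ∈ (r2 i).index,
            Φ ((r1 i).left m ⊗ₜ[k] ((r1 i).right m ⊗ₜ[k]
              ((r2 i).left j ⊗ₜ[k] (r2 i).right j))) := by
          refine Finset.sum_congr rfl fun i _ => ?_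
          have e1 : G (r.left i) =
              ∑ m ∈ (r1 i).index, S ((r1 i).right m) ⊗ₜ[k] S ((r1 i).left m) := by
            rw [hG]
            simp only [LinearMap.comp_apply, LinearEquiv.coe_coe]
            rw [show Δ (r.left i) = CoalgebraStruct.comul (R := k) (r.left i) from rfl,
              ← (r1 i).eq]
            simp [map_sum]
          have e2 : Δ (r.right i) =
              ∑ j ∈ (r2 i).index, (r2 i).left j ⊗ₜ[k] (r2 i).right j := ((r2 i).eq).symm
          rw [e1, e2, Finset.sum_mul_sum]
          refine Finset.sum_congr rfl fun m _ => Finset.sum_congr rfl fun j _ => ?_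
          rw [Algebra.TensorProduct.tmul_mul_tmul, hΦ']
      _ = ∑ i ∈ r.index, ∑ j ∈ (r2 i).index, ∑ m ∈ (r21 i j).index,
            Φ (r.left i ⊗ₜ[k] ((r21 i j).left m ⊗ₜ[k]
              ((r21 i j).right m ⊗ₜ[k] (r2 i).right j))) := sumW4 Φ r r1 r2 r21
      _ = ∑ i ∈ r.index, (1 : H) ⊗ₜ[k] (S (r.left i) * r.right i) := by
          refine Finset.sum_congr rfl fun i _ => ?_
          calc ∑ j ∈ (r2 i).index, ∑ m ∈ (r21 i j).index,
                Φ (r.left i ⊗ₜ[k] ((r21 i j).left m ⊗ₜ[k]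
                  ((r21 i j).right m ⊗ₜ[k] (r2 i).right j)))
              = ∑ j ∈ (r2 i).index, Coalgebra.counit (R := k) ((r2 i).left j) •
                  ((1 : H) ⊗ₜ[k] (S (r.left i) * (r2 i).right j)) := by
                refine Finset.sum_congr rfl fun j _ => ?_
                calc ∑ m ∈ (r21 i j).index,
                      Φ (r.left i ⊗ₜ[k] ((r21 i j).left m ⊗ₜ[k]
                        ((r21 i j).right m ⊗ₜ[k] (r2 i).right j)))
                    = ∑ m ∈ (r21 i j).index, (S ((r21 i j).left m) * (r21 i j).right m)
                        ⊗ₜ[k] (S (r.left i) * (r2 i).right j) := by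
                      exact Finset.sum_congr rfl fun m _ => hΦ' _ _ _ _
                  _ = (∑ m ∈ (r21 i j).index, S ((r21 i j).left m) * (r21 i j).right m)
                        ⊗ₜ[k] (S (r.left i) * (r2 i).right j) :=
                      (TensorProduct.sum_tmul _ _ _).symm
                  _ = algebraMap k H (Coalgebra.counit (R := k) ((r2 i).left j))
                        ⊗ₜ[k] (S (r.left i) * (r2 i).right j) := by
                      rw [sum_antipode_mul_eq_algebraMap_counit (r21 i j)]
                  _ = Coalgebra.counit (R := k) ((r2 i).left j) •
                        ((1 : H) ⊗ₜ[k] (S (r.left i) * (r2 i).right j)) := by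
                      rw [Algebra.algebraMap_eq_smul_one, TensorProduct.smul_tmul']
            _ = ∑ j ∈ (r2 i).index, (1 : H) ⊗ₜ[k]
                  (S (r.left i) * (Coalgebra.counit (R := k) ((r2 i).left j) •
                    (r2 i).right j)) := by
                refine Finset.sum_congr rfl fun j _ => ?_
                rw [mul_smul_comm, tmul_smul]
            _ = (1 : H) ⊗ₜ[k] (S (r.left i) * ∑ j ∈ (r2 i).index,
                  Coalgebra.counit (R := k) ((r2 i).left j) • (r2 i).right j) := by
                rw [Finset.mul_sum, tmul_sum]
            _ = (1 : H) ⊗ₜ[k] (S (r.left i) * r.right i) := by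
                rw [counit_smul_left_sum (r2 i)]
      _ = cunit c := by
          rw [← TensorProduct.tmul_sum, sum_antipode_mul_eq_algebraMap_counit r]
          simp [cunit, Algebra.TensorProduct.one_def, Algebra.algebraMap_eq_smul_one,
            TensorProduct.smul_tmul', tmul_smul]
  have huniq : G = Δ ∘ₗ S := cnv_inv_unique c1 c2
  have happ := LinearMap.congr_fun huniq h
  rw [hG] at happ
  simp only [LinearMap.comp_apply, LinearEquiv.coe_coe] at happ
  exact happ.symm

end


section SinvSection

open Coalgebra LinearMap

variable {k : Type} [CommRing k] {H : Type} [Ring H] [HopfAlgebra k H]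
variable (Sinv : H →ₗ[k] H)

theorem comul_Sinv' (hSinv₁ : ∀ h : H, Sinv (antipode (R := k) h) = h)
    (hSinv₂ : ∀ h : H, antipode (R := k) (Sinv h) = h) (u : H) :
    Coalgebra.comul (R := k) (Sinv u) =
      TensorProduct.map Sinv Sinv
        ((TensorProduct.comm k H H) (Coalgebra.comul (R := k) u)) := by
  have key : ∀ t : H ⊗[k] H,
      TensorProduct.map Sinv Sinv ((TensorProduct.comm k H H)
        (TensorProduct.map (antipode (R := k)) (antipode (R := k))
          ((TensorProduct.comm k H H) t))) = t := by
    intro t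
    induction t using TensorProduct.induction_on with
    | zero => simp
    | tmul x y => simp [hSinv₁]
    | add a b ha hb => simp only [map_add, ha, hb]
  have e := comul_antipode' (k := k) (Sinv u)
  rw [hSinv₂ u] at e
  rw [e]
  exact (key _).symm

/-- A representation of `comul (Sinv u)` from one of `comul u`. -/
noncomputable def SinvRepr (hSinv₁ : ∀ h : H, Sinv (antipode (R := k) h) = h)
    (hSinv₂ : ∀ h : H, antipode (R := k) (Sinv h) = h) {u : H} {ι : Type*} (r : Coalgebra.Repr k u ι) :
    Coalgebra.Repr k (Sinv u) ι where
  index := r.index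
  left i := Sinv (r.right i)
  right i := Sinv (r.left i)
  eq := by
    have h : CoalgebraStruct.comul (R := k) (Sinv u) =
        TensorProduct.map Sinv Sinv
          ((TensorProduct.comm k H H) (CoalgebraStruct.comul (R := k) u)) :=
      comul_Sinv' Sinv hSinv₁ hSinv₂ u
    rw [h, ← r.eq, map_sum, map_sum]
    exact Finset.sum_congr rfl fun i _ => by
      rw [TensorProduct.comm_tmul, TensorProduct.map_tmul]

/-- A representation of `comul (antipode u)` from one of `comul u`. -/
noncomputable def antipodeRepr {u : H} {ι : Type*} (r : Coalgebra.Repr k u ι) :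
    Coalgebra.Repr k (antipode (R := k) u) ι where
  index := r.index
  left i := antipode (R := k) (r.right i)
  right i := antipode (R := k) (r.left i)
  eq := by
    have h : CoalgebraStruct.comul (R := k) (antipode (R := k) u) =
        TensorProduct.map (antipode (R := k)) (antipode (R := k))
          ((TensorProduct.comm k H H) (CoalgebraStruct.comul (R := k) u)) :=
      comul_antipode' u
    rw [h, ← r.eq, map_sum, map_sum]
    exact Finset.sum_congr rfl fun i _ => by
      rw [TensorProduct.comm_tmul, TensorProduct.map_tmul]

theorem counit_Sinv' (hSinv₂ : ∀ h : H, antipode (R := k) (Sinv h) = h) (u : H) :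
    Coalgebra.counit (R := k) (Sinv u) = Coalgebra.counit (R := k) u := by
  conv_rhs => rw [← hSinv₂ u]
  rw [counit_antipode']

theorem sum_mul_Sinv' (hSinv₁ : ∀ h : H, Sinv (antipode (R := k) h) = h)
    (hSinv₂ : ∀ h : H, antipode (R := k) (Sinv h) = h) {u : H} {ι : Type*} (r : Coalgebra.Repr k u ι) :
    ∑ i ∈ r.index, r.right i * Sinv (r.left i) =
      algebraMap k H (Coalgebra.counit (R := k) u) := by
  have h1 := sum_antipode_mul_eq_algebraMap_counit (R := k) (SinvRepr Sinv hSinv₁ hSinv₂ r)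
  simp only [SinvRepr, hSinv₂] at h1
  rw [counit_Sinv' Sinv hSinv₂] at h1
  exact h1

end SinvSection




section HparLemmas

open Coalgebra LinearMap

theorem br_def (y : H) :
    bracket k H y = RingQuot.mkAlgHom k (HparRel k H) (TensorAlgebra.ι k y) := rfl

theorem br_one : bracket k H (1 : H) = 1 := by
  rw [br_def]
  exact (RingQuot.mkAlgHom_rel k (HparRel.one (k := k) (H := H))).trans (map_one _)

theorem br_algebraMap (c : k) :
    bracket k H (algebraMap k H c) = algebraMap k (Hpar k H) c := by
  rw [Algebra.algebraMap_eq_smul_one, map_smul, br_one, Algebra.algebraMap_eq_smul_one]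

theorem mk_sw (f g : H →ₗ[k] TensorAlgebra k H) {x : H} {ι : Type*} (r : Coalgebra.Repr k x ι) :
    RingQuot.mkAlgHom k (HparRel k H) (sw k H f g x) =
      ∑ i ∈ r.index, RingQuot.mkAlgHom k (HparRel k H) (f (r.left i)) *
        RingQuot.mkAlgHom k (HparRel k H) (g (r.right i)) := by
  rw [sw, LinearMap.comp_apply, LinearMap.comp_apply, ← r.eq, map_sum, map_sum, map_sum]
  exact Finset.sum_congr rfl fun i _ => by
    rw [TensorProduct.map_tmul, LinearMap.mul'_apply, map_mul]

theorem eps_repr {x : H} {ι : Type*} (r : Coalgebra.Repr k x ι) :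
    epsilonPar k H x = ∑ i ∈ r.index, bracket k H (r.left i) *
      bracket k H (antipode (R := k) (r.right i)) := by
  rw [epsilonPar, LinearMap.comp_apply, LinearMap.comp_apply, ← r.eq, map_sum, map_sum]
  exact Finset.sum_congr rfl fun i _ => by
    rw [TensorProduct.map_tmul, LinearMap.mul'_apply, LinearMap.comp_apply]

theorem epsT_repr {x : H} {ι : Type*} (r : Coalgebra.Repr k x ι) :
    epsilonTildePar k H x = ∑ i ∈ r.index, bracket k H (antipode (R := k) (r.left i)) *
      bracket k H (r.right i) := by
  rw [epsilonTildePar, LinearMap.comp_apply, LinearMap.comp_apply, ← r.eq, map_sum, map_sum]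
  exact Finset.sum_congr rfl fun i _ => by
    rw [TensorProduct.map_tmul, LinearMap.mul'_apply, LinearMap.comp_apply]

theorem eps_eq_mk (x : H) :
    epsilonPar k H x = RingQuot.mkAlgHom k (HparRel k H)
      (sw k H (TensorAlgebra.ι k) ((TensorAlgebra.ι k) ∘ₗ antipode (R := k)) x) := by
  rw [mk_sw k H _ _ (ℛ k x), eps_repr k H (ℛ k x)]
  exact Finset.sum_congr rfl fun i _ => by rw [LinearMap.comp_apply]; rfl

theorem epsT_eq_mk (x : H) :
    epsilonTildePar k H x = RingQuot.mkAlgHom k (HparRel k H)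
      (sw k H ((TensorAlgebra.ι k) ∘ₗ antipode (R := k)) (TensorAlgebra.ι k) x) := by
  rw [mk_sw k H _ _ (ℛ k x), epsT_repr k H (ℛ k x)]
  exact Finset.sum_congr rfl fun i _ => by rw [LinearMap.comp_apply]; rfl

theorem rel2' (h x : H) {ι : Type*} (r : Coalgebra.Repr k x ι) :
    bracket k H h * epsilonPar k H x =
      ∑ i ∈ r.index, bracket k H (h * r.left i) *
        bracket k H (antipode (R := k) (r.right i)) := by
  have e := RingQuot.mkAlgHom_rel k (HparRel.pr2 (k := k) (H := H) h x)
  rw [map_mul, ← eps_eq_mk, ← br_def, mk_sw k H _ _ r] at e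
  rw [e]
  exact Finset.sum_congr rfl fun i _ => by
    simp only [LinearMap.comp_apply, LinearMap.mulLeft_apply, br_def]

theorem rel3' (h x : H) {ι : Type*} (r : Coalgebra.Repr k h ι) :
    epsilonPar k H h * bracket k H x =
      ∑ i ∈ r.index, bracket k H (r.left i) *
        bracket k H (antipode (R := k) (r.right i) * x) := by
  have e := RingQuot.mkAlgHom_rel k (HparRel.pr3 (k := k) (H := H) h x)
  rw [map_mul, ← eps_eq_mk, ← br_def, mk_sw k H _ _ r] at e
  rw [e]
  exact Finset.sum_congr rfl fun i _ => by
    simp only [LinearMap.comp_apply, LinearMap.mulRight_apply, br_def]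

theorem rel4' (h x : H) {ι : Type*} (r : Coalgebra.Repr k x ι) :
    bracket k H h * epsilonTildePar k H x =
      ∑ i ∈ r.index, bracket k H (h * antipode (R := k) (r.left i)) *
        bracket k H (r.right i) := by
  have e := RingQuot.mkAlgHom_rel k (HparRel.pr4 (k := k) (H := H) h x)
  rw [map_mul, ← epsT_eq_mk, ← br_def, mk_sw k H _ _ r] at e
  rw [e]
  exact Finset.sum_congr rfl fun i _ => by
    simp only [LinearMap.comp_apply, LinearMap.mulLeft_apply, br_def]

theorem rel5' (h x : H) {ι : Type*} (r : Coalgebra.Repr k h ι) :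
    epsilonTildePar k H h * bracket k H x =
      ∑ i ∈ r.index, bracket k H (antipode (R := k) (r.left i)) *
        bracket k H (r.right i * x) := by
  have e := RingQuot.mkAlgHom_rel k (HparRel.pr5 (k := k) (H := H) h x)
  rw [map_mul, ← epsT_eq_mk, ← br_def, mk_sw k H _ _ r] at e
  rw [e]
  exact Finset.sum_congr rfl fun i _ => by
    simp only [LinearMap.comp_apply, LinearMap.mulRight_apply, br_def]

end HparLemmas



section MainLemmas

open Coalgebra LinearMap

theorem lemC (h : H) {ι : Type*} (r : Coalgebra.Repr k h ι) :
    ∑ i ∈ r.index, epsilonPar k H (r.left i) * epsilonPar k H (r.right i) =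
      epsilonPar k H h := by
  classical
  set r1 : ∀ i, Coalgebra.Repr k (r.left i) (H × H) := fun i => ℛ k (r.left i) with hr1
  set r2 : ∀ i, Coalgebra.Repr k (r.right i) (H × H) := fun i => ℛ k (r.right i) with hr2
  set r21 : ∀ i j, Coalgebra.Repr k ((r2 i).left j) (H × H) := fun i j => ℛ k ((r2 i).left j)
    with hr21
  set Φ : H ⊗[k] (H ⊗[k] (H ⊗[k] H)) →ₗ[k] Hpar k H :=
    LinearMap.mul' k (Hpar k H) ∘ₗ TensorProduct.map (bracket k H)
      (LinearMap.mul' k (Hpar k H) ∘ₗ TensorProduct.map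
        (bracket k H ∘ₗ LinearMap.mul' k H ∘ₗ
          TensorProduct.map (antipode (R := k)) LinearMap.id)
        (bracket k H ∘ₗ antipode (R := k)) ∘ₗ
        (TensorProduct.assoc k H H H).symm.toLinearMap) with hΦ
  have hΦ' : ∀ x y z w : H, Φ (x ⊗ₜ[k] (y ⊗ₜ[k] (z ⊗ₜ[k] w))) =
      bracket k H x * (bracket k H (antipode (R := k) y * z) *
        bracket k H (antipode (R := k) w)) := by
    intro x y z w; simp [hΦ]
  calc ∑ i ∈ r.index, epsilonPar k H (r.left i) * epsilonPar k H (r.right i)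
      = ∑ i ∈ r.index, ∑ j ∈ (r2 i).index, ∑ m ∈ (r1 i).index,
          Φ ((r1 i).left m ⊗ₜ[k] ((r1 i).right m ⊗ₜ[k]
            ((r2 i).left j ⊗ₜ[k] (r2 i).right j))) := by
        refine Finset.sum_congr rfl fun i _ => ?_
        rw [eps_repr k H (r2 i), Finset.mul_sum]
        refine Finset.sum_congr rfl fun j _ => ?_
        rw [← mul_assoc, rel3' k H (r.left i) ((r2 i).left j) (r1 i), Finset.sum_mul]
        refine Finset.sum_congr rfl fun m _ => ?_
        rw [hΦ' _ _ _ _, mul_assoc]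
    _ = ∑ i ∈ r.index, ∑ m ∈ (r1 i).index, ∑ j ∈ (r2 i).index,
          Φ ((r1 i).left m ⊗ₜ[k] ((r1 i).right m ⊗ₜ[k]
            ((r2 i).left j ⊗ₜ[k] (r2 i).right j))) :=
        Finset.sum_congr rfl fun i _ => Finset.sum_comm
    _ = ∑ i ∈ r.index, ∑ j ∈ (r2 i).index, ∑ m ∈ (r21 i j).index,
          Φ (r.left i ⊗ₜ[k] ((r21 i j).left m ⊗ₜ[k]
            ((r21 i j).right m ⊗ₜ[k] (r2 i).right j))) := sumW4 Φ r r1 r2 r21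
    _ = ∑ i ∈ r.index, ∑ j ∈ (r2 i).index, Coalgebra.counit (R := k) ((r2 i).left j) •
          (bracket k H (r.left i) *
            bracket k H (antipode (R := k) ((r2 i).right j))) := by
        refine Finset.sum_congr rfl fun i _ => Finset.sum_congr rfl fun j _ => ?_
        calc ∑ m ∈ (r21 i j).index,
              Φ (r.left i ⊗ₜ[k] ((r21 i j).left m ⊗ₜ[k]
                ((r21 i j).right m ⊗ₜ[k] (r2 i).right j)))
            = ∑ m ∈ (r21 i j).index, bracket k H (r.left i) *
                (bracket k H (antipode (R := k) ((r21 i j).left m) * (r21 i j).right m) *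
                  bracket k H (antipode (R := k) ((r2 i).right j))) :=
              Finset.sum_congr rfl fun m _ => hΦ' _ _ _ _
          _ = bracket k H (r.left i) *
                (bracket k H (∑ m ∈ (r21 i j).index,
                  antipode (R := k) ((r21 i j).left m) * (r21 i j).right m) *
                  bracket k H (antipode (R := k) ((r2 i).right j))) := by
              rw [map_sum, Finset.sum_mul, Finset.mul_sum]
          _ = bracket k H (r.left i) *
                (bracket k H (algebraMap k H (Coalgebra.counit (R := k) ((r2 i).left j))) *
                  bracket k H (antipode (R := k) ((r2 i).right j))) := by
              rw [sum_antipode_mul_eq_algebraMap_counit (r21 i j)]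
          _ = Coalgebra.counit (R := k) ((r2 i).left j) •
                (bracket k H (r.left i) *
                  bracket k H (antipode (R := k) ((r2 i).right j))) := by
              rw [br_algebraMap, ← Algebra.smul_def, mul_smul_comm]
    _ = ∑ i ∈ r.index, bracket k H (r.left i) *
          bracket k H (antipode (R := k) (r.right i)) := by
        refine Finset.sum_congr rfl fun i _ => ?_
        calc ∑ j ∈ (r2 i).index, Coalgebra.counit (R := k) ((r2 i).left j) •
              (bracket k H (r.left i) *
                bracket k H (antipode (R := k) ((r2 i).right j)))
            = ∑ j ∈ (r2 i).index, bracket k H (r.left i) *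
                bracket k H (antipode (R := k)
                  (Coalgebra.counit (R := k) ((r2 i).left j) • (r2 i).right j)) :=
              Finset.sum_congr rfl fun j _ => by rw [map_smul, map_smul, mul_smul_comm]
          _ = bracket k H (r.left i) * bracket k H (antipode (R := k)
                (∑ j ∈ (r2 i).index,
                  Coalgebra.counit (R := k) ((r2 i).left j) • (r2 i).right j)) := by
              rw [map_sum, map_sum, Finset.mul_sum]
          _ = bracket k H (r.left i) *
                bracket k H (antipode (R := k) (r.right i)) := by
              rw [counit_smul_left_sum (r2 i)]
    _ = epsilonPar k H h := (eps_repr k H r).symm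

theorem lemF (h : H) {ι : Type*} (r : Coalgebra.Repr k h ι) :
    ∑ i ∈ r.index, epsilonTildePar k H (r.left i) * epsilonTildePar k H (r.right i) =
      epsilonTildePar k H h := by
  classical
  set r1 : ∀ i, Coalgebra.Repr k (r.left i) (H × H) := fun i => ℛ k (r.left i) with hr1
  set r2 : ∀ i, Coalgebra.Repr k (r.right i) (H × H) := fun i => ℛ k (r.right i) with hr2
  set r21 : ∀ i j, Coalgebra.Repr k ((r2 i).left j) (H × H) := fun i j => ℛ k ((r2 i).left j)
    with hr21
  set Φ : H ⊗[k] (H ⊗[k] (H ⊗[k] H)) →ₗ[k] Hpar k H :=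
    LinearMap.mul' k (Hpar k H) ∘ₗ TensorProduct.map (bracket k H ∘ₗ antipode (R := k))
      (LinearMap.mul' k (Hpar k H) ∘ₗ TensorProduct.map
        (bracket k H ∘ₗ LinearMap.mul' k H ∘ₗ
          TensorProduct.map LinearMap.id (antipode (R := k)))
        (bracket k H) ∘ₗ
        (TensorProduct.assoc k H H H).symm.toLinearMap) with hΦ
  have hΦ' : ∀ x y z w : H, Φ (x ⊗ₜ[k] (y ⊗ₜ[k] (z ⊗ₜ[k] w))) =
      bracket k H (antipode (R := k) x) *
        (bracket k H (y * antipode (R := k) z) * bracket k H w) := by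
    intro x y z w; simp [hΦ]
  calc ∑ i ∈ r.index, epsilonTildePar k H (r.left i) * epsilonTildePar k H (r.right i)
      = ∑ i ∈ r.index, ∑ j ∈ (r2 i).index, ∑ m ∈ (r1 i).index,
          Φ ((r1 i).left m ⊗ₜ[k] ((r1 i).right m ⊗ₜ[k]
            ((r2 i).left j ⊗ₜ[k] (r2 i).right j))) := by
        refine Finset.sum_congr rfl fun i _ => ?_
        rw [epsT_repr k H (r2 i), Finset.mul_sum]
        refine Finset.sum_congr rfl fun j _ => ?_
        rw [← mul_assoc, rel5' k H (r.left i) (antipode (R := k) ((r2 i).left j)) (r1 i),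
          Finset.sum_mul]
        refine Finset.sum_congr rfl fun m _ => ?_
        rw [hΦ' _ _ _ _, mul_assoc]
    _ = ∑ i ∈ r.index, ∑ m ∈ (r1 i).index, ∑ j ∈ (r2 i).index,
          Φ ((r1 i).left m ⊗ₜ[k] ((r1 i).right m ⊗ₜ[k]
            ((r2 i).left j ⊗ₜ[k] (r2 i).right j))) :=
        Finset.sum_congr rfl fun i _ => Finset.sum_comm
    _ = ∑ i ∈ r.index, ∑ j ∈ (r2 i).index, ∑ m ∈ (r21 i j).index,
          Φ (r.left i ⊗ₜ[k] ((r21 i j).left m ⊗ₜ[k]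
            ((r21 i j).right m ⊗ₜ[k] (r2 i).right j))) := sumW4 Φ r r1 r2 r21
    _ = ∑ i ∈ r.index, ∑ j ∈ (r2 i).index, Coalgebra.counit (R := k) ((r2 i).left j) •
          (bracket k H (antipode (R := k) (r.left i)) * bracket k H ((r2 i).right j)) := by
        refine Finset.sum_congr rfl fun i _ => Finset.sum_congr rfl fun j _ => ?_
        calc ∑ m ∈ (r21 i j).index,
              Φ (r.left i ⊗ₜ[k] ((r21 i j).left m ⊗ₜ[k]
                ((r21 i j).right m ⊗ₜ[k] (r2 i).right j)))
            = ∑ m ∈ (r21 i j).index, bracket k H (antipode (R := k) (r.left i)) *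
                (bracket k H ((r21 i j).left m * antipode (R := k) ((r21 i j).right m)) *
                  bracket k H ((r2 i).right j)) :=
              Finset.sum_congr rfl fun m _ => hΦ' _ _ _ _
          _ = bracket k H (antipode (R := k) (r.left i)) *
                (bracket k H (∑ m ∈ (r21 i j).index,
                  (r21 i j).left m * antipode (R := k) ((r21 i j).right m)) *
                  bracket k H ((r2 i).right j)) := by
              rw [map_sum, Finset.sum_mul, Finset.mul_sum]
          _ = bracket k H (antipode (R := k) (r.left i)) *
                (bracket k H (algebraMap k H (Coalgebra.counit (R := k) ((r2 i).left j))) *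
                  bracket k H ((r2 i).right j)) := by
              rw [sum_mul_antipode_eq_algebraMap_counit (r21 i j)]
          _ = Coalgebra.counit (R := k) ((r2 i).left j) •
                (bracket k H (antipode (R := k) (r.left i)) *
                  bracket k H ((r2 i).right j)) := by
              rw [br_algebraMap, ← Algebra.smul_def, mul_smul_comm]
    _ = ∑ i ∈ r.index, bracket k H (antipode (R := k) (r.left i)) *
          bracket k H (r.right i) := by
        refine Finset.sum_congr rfl fun i _ => ?_
        calc ∑ j ∈ (r2 i).index, Coalgebra.counit (R := k) ((r2 i).left j) •
              (bracket k H (antipode (R := k) (r.left i)) * bracket k H ((r2 i).right j))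
            = ∑ j ∈ (r2 i).index, bracket k H (antipode (R := k) (r.left i)) *
                bracket k H (Coalgebra.counit (R := k) ((r2 i).left j) • (r2 i).right j) :=
              Finset.sum_congr rfl fun j _ => by rw [map_smul, mul_smul_comm]
          _ = bracket k H (antipode (R := k) (r.left i)) * bracket k H
                (∑ j ∈ (r2 i).index,
                  Coalgebra.counit (R := k) ((r2 i).left j) • (r2 i).right j) := by
              rw [map_sum, Finset.mul_sum]
          _ = bracket k H (antipode (R := k) (r.left i)) * bracket k H (r.right i) := by
              rw [counit_smul_left_sum (r2 i)]
    _ = epsilonTildePar k H h := (epsT_repr k H r).symm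

end MainLemmas



section MainLemmas2

open Coalgebra LinearMap

theorem lemB (h x : H) {ι : Type*} (r : Coalgebra.Repr k h ι) :
    bracket k H h * epsilonPar k H x =
      ∑ i ∈ r.index, epsilonPar k H (r.left i * x) * bracket k H (r.right i) := by
  classical
  set rx := ℛ k x with hrx
  set r1 : ∀ i, Coalgebra.Repr k (r.left i) (H × H) := fun i => ℛ k (r.left i) with hr1
  set r2 : ∀ i, Coalgebra.Repr k (r.right i) (H × H) := fun i => ℛ k (r.right i) with hr2
  set Φ : (H × H) → (H ⊗[k] (H ⊗[k] H) →ₗ[k] Hpar k H) := fun l =>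
    LinearMap.mul' k (Hpar k H) ∘ₗ TensorProduct.map
      (bracket k H ∘ₗ LinearMap.mulRight k (rx.left l))
      (bracket k H ∘ₗ LinearMap.mulLeft k (antipode (R := k) (rx.right l)) ∘ₗ
        LinearMap.mul' k H ∘ₗ TensorProduct.map (antipode (R := k)) LinearMap.id) with hΦ
  have hΦ' : ∀ (l) (u v w : H), Φ l (u ⊗ₜ[k] (v ⊗ₜ[k] w)) =
      bracket k H (u * rx.left l) * bracket k H (antipode (R := k) (rx.right l) *
        (antipode (R := k) v * w)) := by
    intro l u v w; simp [hΦ]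
  symm
  calc ∑ i ∈ r.index, epsilonPar k H (r.left i * x) * bracket k H (r.right i)
      = ∑ i ∈ r.index, ∑ m ∈ (r1 i).index, ∑ l ∈ rx.index,
          Φ l ((r1 i).left m ⊗ₜ[k] ((r1 i).right m ⊗ₜ[k] r.right i)) := by
        refine Finset.sum_congr rfl fun i _ => ?_
        rw [rel3' k H (r.left i * x) (r.right i) (mulRepr (r1 i) rx)]
        show ∑ p ∈ (r1 i).index ×ˢ rx.index,
            bracket k H ((r1 i).left p.1 * rx.left p.2) *
              bracket k H (antipode (R := k) ((r1 i).right p.1 * rx.right p.2) * r.right i)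
            = _
        rw [Finset.sum_product]
        refine Finset.sum_congr rfl fun m _ => Finset.sum_congr rfl fun l _ => ?_
        rw [hΦ' l _ _ _, antipode_mul', mul_assoc]
    _ = ∑ i ∈ r.index, ∑ l ∈ rx.index, ∑ m ∈ (r1 i).index,
          Φ l ((r1 i).left m ⊗ₜ[k] ((r1 i).right m ⊗ₜ[k] r.right i)) :=
        Finset.sum_congr rfl fun i _ => Finset.sum_comm
    _ = ∑ l ∈ rx.index, ∑ i ∈ r.index, ∑ m ∈ (r1 i).index,
          Φ l ((r1 i).left m ⊗ₜ[k] ((r1 i).right m ⊗ₜ[k] r.right i)) := Finset.sum_comm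
    _ = ∑ l ∈ rx.index, ∑ i ∈ r.index, ∑ j ∈ (r2 i).index,
          Φ l (r.left i ⊗ₜ[k] ((r2 i).left j ⊗ₜ[k] (r2 i).right j)) :=
        Finset.sum_congr rfl fun l _ => sumW3 (Φ l) r r1 r2
    _ = ∑ l ∈ rx.index, ∑ i ∈ r.index, Coalgebra.counit (R := k) (r.right i) •
          (bracket k H (r.left i * rx.left l) *
            bracket k H (antipode (R := k) (rx.right l))) := by
        refine Finset.sum_congr rfl fun l _ => Finset.sum_congr rfl fun i _ => ?_
        calc ∑ j ∈ (r2 i).index,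
              Φ l (r.left i ⊗ₜ[k] ((r2 i).left j ⊗ₜ[k] (r2 i).right j))
            = ∑ j ∈ (r2 i).index, bracket k H (r.left i * rx.left l) *
                bracket k H (antipode (R := k) (rx.right l) *
                  (antipode (R := k) ((r2 i).left j) * (r2 i).right j)) :=
              Finset.sum_congr rfl fun j _ => hΦ' _ _ _ _
          _ = bracket k H (r.left i * rx.left l) *
                bracket k H (antipode (R := k) (rx.right l) *
                  (∑ j ∈ (r2 i).index,
                    antipode (R := k) ((r2 i).left j) * (r2 i).right j)) := by
              rw [Finset.mul_sum, map_sum, Finset.mul_sum]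
          _ = bracket k H (r.left i * rx.left l) *
                bracket k H (antipode (R := k) (rx.right l) *
                  algebraMap k H (Coalgebra.counit (R := k) (r.right i))) := by
              rw [sum_antipode_mul_eq_algebraMap_counit (r2 i)]
          _ = Coalgebra.counit (R := k) (r.right i) •
                (bracket k H (r.left i * rx.left l) *
                  bracket k H (antipode (R := k) (rx.right l))) := by
              rw [← Algebra.commutes, ← Algebra.smul_def, map_smul, mul_smul_comm]
    _ = ∑ l ∈ rx.index, bracket k H (h * rx.left l) *
          bracket k H (antipode (R := k) (rx.right l)) := by
        refine Finset.sum_congr rfl fun l _ => ?_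
        calc ∑ i ∈ r.index, Coalgebra.counit (R := k) (r.right i) •
              (bracket k H (r.left i * rx.left l) *
                bracket k H (antipode (R := k) (rx.right l)))
            = ∑ i ∈ r.index,
                bracket k H ((Coalgebra.counit (R := k) (r.right i) • r.left i) * rx.left l) *
                  bracket k H (antipode (R := k) (rx.right l)) :=
              Finset.sum_congr rfl fun i _ => by
                rw [smul_mul_assoc, map_smul, smul_mul_assoc]
          _ = bracket k H ((∑ i ∈ r.index,
                Coalgebra.counit (R := k) (r.right i) • r.left i) * rx.left l) *
                  bracket k H (antipode (R := k) (rx.right l)) := by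
              rw [Finset.sum_mul, map_sum, Finset.sum_mul]
          _ = bracket k H (h * rx.left l) * bracket k H (antipode (R := k) (rx.right l)) := by
              rw [counit_smul_right_sum r]
    _ = bracket k H h * epsilonPar k H x := (rel2' k H h x rx).symm

theorem lemA (Sinv : H →ₗ[k] H)
    (hSinv₁ : ∀ h : H, Sinv (antipode (R := k) h) = h)
    (hSinv₂ : ∀ h : H, antipode (R := k) (Sinv h) = h) (x h : H)
    {ι : Type*} (r : Coalgebra.Repr k h ι) :
    epsilonPar k H x * bracket k H h =
      ∑ i ∈ r.index, bracket k H (r.right i) * epsilonPar k H (Sinv (r.left i) * x) := by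
  classical
  set rx := ℛ k x with hrx
  set r1 : ∀ i, Coalgebra.Repr k (r.left i) (H × H) := fun i => ℛ k (r.left i) with hr1
  set r2 : ∀ i, Coalgebra.Repr k (r.right i) (H × H) := fun i => ℛ k (r.right i) with hr2
  set Φ : (H × H) → (H ⊗[k] (H ⊗[k] H) →ₗ[k] Hpar k H) := fun l =>
    LinearMap.mul' k (Hpar k H) ∘ₗ TensorProduct.map
      (bracket k H ∘ₗ LinearMap.mul' k H ∘ₗ (TensorProduct.comm k H H).toLinearMap ∘ₗ
        TensorProduct.map (LinearMap.mulRight k (rx.left l) ∘ₗ Sinv) LinearMap.id)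
      (bracket k H ∘ₗ LinearMap.mulLeft k (antipode (R := k) (rx.right l))) ∘ₗ
      (TensorProduct.comm k H (H ⊗[k] H)).toLinearMap with hΦ
  have hΦ' : ∀ (l) (u v w : H), Φ l (u ⊗ₜ[k] (v ⊗ₜ[k] w)) =
      bracket k H (w * (Sinv v * rx.left l)) *
        bracket k H (antipode (R := k) (rx.right l) * u) := by
    intro l u v w; simp [hΦ]
  symm
  calc ∑ i ∈ r.index, bracket k H (r.right i) * epsilonPar k H (Sinv (r.left i) * x)
      = ∑ i ∈ r.index, ∑ m ∈ (r1 i).index, ∑ l ∈ rx.index,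
          Φ l ((r1 i).left m ⊗ₜ[k] ((r1 i).right m ⊗ₜ[k] r.right i)) := by
        refine Finset.sum_congr rfl fun i _ => ?_
        rw [rel2' k H (r.right i) (Sinv (r.left i) * x)
          (mulRepr (SinvRepr Sinv hSinv₁ hSinv₂ (r1 i)) rx)]
        show ∑ p ∈ (r1 i).index ×ˢ rx.index,
            bracket k H (r.right i * (Sinv ((r1 i).right p.1) * rx.left p.2)) *
              bracket k H (antipode (R := k) (Sinv ((r1 i).left p.1) * rx.right p.2))
            = _
        rw [Finset.sum_product]
        refine Finset.sum_congr rfl fun m _ => Finset.sum_congr rfl fun l _ => ?_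
        rw [hΦ' l _ _ _, antipode_mul', hSinv₂]
    _ = ∑ i ∈ r.index, ∑ l ∈ rx.index, ∑ m ∈ (r1 i).index,
          Φ l ((r1 i).left m ⊗ₜ[k] ((r1 i).right m ⊗ₜ[k] r.right i)) :=
        Finset.sum_congr rfl fun i _ => Finset.sum_comm
    _ = ∑ l ∈ rx.index, ∑ i ∈ r.index, ∑ m ∈ (r1 i).index,
          Φ l ((r1 i).left m ⊗ₜ[k] ((r1 i).right m ⊗ₜ[k] r.right i)) := Finset.sum_comm
    _ = ∑ l ∈ rx.index, ∑ i ∈ r.index, ∑ j ∈ (r2 i).index,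
          Φ l (r.left i ⊗ₜ[k] ((r2 i).left j ⊗ₜ[k] (r2 i).right j)) :=
        Finset.sum_congr rfl fun l _ => sumW3 (Φ l) r r1 r2
    _ = ∑ l ∈ rx.index, ∑ i ∈ r.index, Coalgebra.counit (R := k) (r.right i) •
          (bracket k H (rx.left l) *
            bracket k H (antipode (R := k) (rx.right l) * r.left i)) := by
        refine Finset.sum_congr rfl fun l _ => Finset.sum_congr rfl fun i _ => ?_
        calc ∑ j ∈ (r2 i).index,
              Φ l (r.left i ⊗ₜ[k] ((r2 i).left j ⊗ₜ[k] (r2 i).right j))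
            = ∑ j ∈ (r2 i).index,
                bracket k H (((r2 i).right j * Sinv ((r2 i).left j)) * rx.left l) *
                  bracket k H (antipode (R := k) (rx.right l) * r.left i) :=
              Finset.sum_congr rfl fun j _ => by rw [hΦ' l _ _ _, mul_assoc]
          _ = bracket k H ((∑ j ∈ (r2 i).index,
                (r2 i).right j * Sinv ((r2 i).left j)) * rx.left l) *
                  bracket k H (antipode (R := k) (rx.right l) * r.left i) := by
              rw [Finset.sum_mul, map_sum, Finset.sum_mul]
          _ = bracket k H (algebraMap k H (Coalgebra.counit (R := k) (r.right i)) *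
                rx.left l) * bracket k H (antipode (R := k) (rx.right l) * r.left i) := by
              rw [sum_mul_Sinv' Sinv hSinv₁ hSinv₂ (r2 i)]
          _ = Coalgebra.counit (R := k) (r.right i) •
                (bracket k H (rx.left l) *
                  bracket k H (antipode (R := k) (rx.right l) * r.left i)) := by
              rw [← Algebra.smul_def, map_smul, smul_mul_assoc]
    _ = ∑ l ∈ rx.index, bracket k H (rx.left l) *
          bracket k H (antipode (R := k) (rx.right l) * h) := by
        refine Finset.sum_congr rfl fun l _ => ?_
        calc ∑ i ∈ r.index, Coalgebra.counit (R := k) (r.right i) •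
              (bracket k H (rx.left l) *
                bracket k H (antipode (R := k) (rx.right l) * r.left i))
            = ∑ i ∈ r.index, bracket k H (rx.left l) *
                bracket k H (antipode (R := k) (rx.right l) *
                  (Coalgebra.counit (R := k) (r.right i) • r.left i)) :=
              Finset.sum_congr rfl fun i _ => by
                rw [mul_smul_comm, map_smul, mul_smul_comm]
          _ = bracket k H (rx.left l) * bracket k H (antipode (R := k) (rx.right l) *
                (∑ i ∈ r.index, Coalgebra.counit (R := k) (r.right i) • r.left i)) := by
              rw [Finset.mul_sum, map_sum, Finset.mul_sum]
          _ = bracket k H (rx.left l) *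
                bracket k H (antipode (R := k) (rx.right l) * h) := by
              rw [counit_smul_right_sum r]
    _ = epsilonPar k H x * bracket k H h := (rel3' k H x h rx).symm

theorem lemG (Sinv : H →ₗ[k] H)
    (hSinv₁ : ∀ h : H, Sinv (antipode (R := k) h) = h)
    (hSinv₂ : ∀ h : H, antipode (R := k) (Sinv h) = h) (h x : H) :
    epsilonTildePar k H h * epsilonPar k H x =
      epsilonPar k H x * epsilonTildePar k H h := by
  classical
  set r := ℛ k h with hr
  set r1 : ∀ i, Coalgebra.Repr k (r.left i) (H × H) := fun i => ℛ k (r.left i) with hr1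
  set r2 : ∀ i, Coalgebra.Repr k (r.right i) (H × H) := fun i => ℛ k (r.right i) with hr2
  set Φ : H ⊗[k] (H ⊗[k] H) →ₗ[k] Hpar k H :=
    LinearMap.mul' k (Hpar k H) ∘ₗ TensorProduct.map
      (bracket k H ∘ₗ antipode (R := k))
      (LinearMap.mul' k (Hpar k H) ∘ₗ TensorProduct.map
        (epsilonPar k H ∘ₗ LinearMap.mulRight k x) (bracket k H)) with hΦ
  have hΦ' : ∀ u v w : H, Φ (u ⊗ₜ[k] (v ⊗ₜ[k] w)) =
      bracket k H (antipode (R := k) u) * (epsilonPar k H (v * x) * bracket k H w) := by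
    intro u v w; simp [hΦ]
  have hL : epsilonTildePar k H h * epsilonPar k H x =
      ∑ i ∈ r.index, ∑ j ∈ (r2 i).index,
        Φ (r.left i ⊗ₜ[k] ((r2 i).left j ⊗ₜ[k] (r2 i).right j)) := by
    calc epsilonTildePar k H h * epsilonPar k H x
        = ∑ i ∈ r.index, bracket k H (antipode (R := k) (r.left i)) *
            (bracket k H (r.right i) * epsilonPar k H x) := by
          rw [epsT_repr k H r, Finset.sum_mul]
          exact Finset.sum_congr rfl fun i _ => mul_assoc _ _ _
      _ = ∑ i ∈ r.index, ∑ j ∈ (r2 i).index,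
            Φ (r.left i ⊗ₜ[k] ((r2 i).left j ⊗ₜ[k] (r2 i).right j)) := by
          refine Finset.sum_congr rfl fun i _ => ?_
          rw [lemB k H (r.right i) x (r2 i), Finset.mul_sum]
          exact Finset.sum_congr rfl fun j _ => by rw [hΦ' _ _ _]
  have hR : epsilonPar k H x * epsilonTildePar k H h =
      ∑ i ∈ r.index, ∑ m ∈ (r1 i).index,
        Φ ((r1 i).left m ⊗ₜ[k] ((r1 i).right m ⊗ₜ[k] r.right i)) := by
    calc epsilonPar k H x * epsilonTildePar k H h
        = ∑ i ∈ r.index, (epsilonPar k H x * bracket k H (antipode (R := k) (r.left i))) *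
            bracket k H (r.right i) := by
          rw [epsT_repr k H r, Finset.mul_sum]
          exact Finset.sum_congr rfl fun i _ => (mul_assoc _ _ _).symm
      _ = ∑ i ∈ r.index, ∑ m ∈ (r1 i).index,
            Φ ((r1 i).left m ⊗ₜ[k] ((r1 i).right m ⊗ₜ[k] r.right i)) := by
          refine Finset.sum_congr rfl fun i _ => ?_
          rw [lemA k H Sinv hSinv₁ hSinv₂ x (antipode (R := k) (r.left i))
            (antipodeRepr (r1 i)), Finset.sum_mul]
          show ∑ m ∈ (r1 i).index, (bracket k H (antipode (R := k) ((r1 i).left m)) *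
              epsilonPar k H (Sinv (antipode (R := k) ((r1 i).right m)) * x)) *
                bracket k H (r.right i) = _
          refine Finset.sum_congr rfl fun m _ => ?_
          rw [hSinv₁, hΦ' _ _ _, mul_assoc]
  rw [hL, hR]
  exact (sumW3 Φ r r1 r2).symm

end MainLemmas2



/-- For a Hopf algebra `H` with invertible antipode (with inverse `Sinv`),
the elements `ε_h = [h₍₁₎][S(h₍₂₎)]` and `ε̃_h = [S(h₍₁₎)][h₍₂₎]` of `H_par` satisfy:
(a) `ε_x[h] = [h₍₂₎]ε_{S⁻¹(h₍₁₎)x}`; (b) `[h]ε_x = ε_{h₍₁₎x}[h₍₂₎]`;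
(c) `ε_{h₍₁₎}ε_{h₍₂₎} = ε_h`; (f) `ε̃_{h₍₁₎}ε̃_{h₍₂₎} = ε̃_h`; (g) `ε̃_h ε_x = ε_x ε̃_h`. -/
theorem Hpar_epsilon_identities (Sinv : H →ₗ[k] H)
    (hSinv₁ : ∀ h : H, Sinv (antipode (R := k) h) = h)
    (hSinv₂ : ∀ h : H, antipode (R := k) (Sinv h) = h) :
    -- (a)
    (∀ (h x : H) (n : ℕ) (h1 h2 : Fin n → H),
      Coalgebra.comul (R := k) h = ∑ i, h1 i ⊗ₜ[k] h2 i →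
      epsilonPar k H x * bracket k H h =
        ∑ i, bracket k H (h2 i) * epsilonPar k H (Sinv (h1 i) * x)) ∧
    -- (b)
    (∀ (h x : H) (n : ℕ) (h1 h2 : Fin n → H),
      Coalgebra.comul (R := k) h = ∑ i, h1 i ⊗ₜ[k] h2 i →
      bracket k H h * epsilonPar k H x =
        ∑ i, epsilonPar k H (h1 i * x) * bracket k H (h2 i)) ∧
    -- (c)
    (∀ (h : H) (n : ℕ) (h1 h2 : Fin n → H),
      Coalgebra.comul (R := k) h = ∑ i, h1 i ⊗ₜ[k] h2 i →
      ∑ i, epsilonPar k H (h1 i) * epsilonPar k H (h2 i) = epsilonPar k H h) ∧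
    -- (f)
    (∀ (h : H) (n : ℕ) (h1 h2 : Fin n → H),
      Coalgebra.comul (R := k) h = ∑ i, h1 i ⊗ₜ[k] h2 i →
      ∑ i, epsilonTildePar k H (h1 i) * epsilonTildePar k H (h2 i) = epsilonTildePar k H h) ∧
    -- (g)
    (∀ h x : H, epsilonTildePar k H h * epsilonPar k H x =
      epsilonPar k H x * epsilonTildePar k H h) := by
  refine ⟨?_, ?_, ?_, ?_, ?_⟩
  · intro h x n h1 h2 hc
    exact lemA k H Sinv hSinv₁ hSinv₂ x h ⟨Finset.univ, h1, h2, hc.symm⟩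
  · intro h x n h1 h2 hc
    exact lemB k H h x ⟨Finset.univ, h1, h2, hc.symm⟩
  · intro h n h1 h2 hc
    exact lemC k H h ⟨Finset.univ, h1, h2, hc.symm⟩
  · intro h n h1 h2 hc
    exact lemF k H h ⟨Finset.univ, h1, h2, hc.symm⟩
  · intro h x
    exact lemG k H Sinv hSinv₁ hSinv₂ h x
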